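/- arXiv:1101.5421 — 5 statements merged into one kernel-verified Lean document; each statement's English description precedes it below -/
import Mathlib

section
/- For every oriented graph D: hom_IV(D) ≥ hom_I(D), where hom_IV(D) = ∑_{x,x'}(d⁺⁺(x,x')² + d⁻⁻(x,x')²) and hom_I(D) = 2∑_{x,x'} d⁺⁻(x,x')·d⁻⁺(x,x'). -/
open Finset Matrix

/-- Joint degree d⁺⁺ -/
noncomputable def dpp {n : ℕ} (M : Matrix (Fin n) (Fin n) ℝ) (x x' : Fin n) : ℕ :=
  (Finset.univ.filter fun y => M x y = 1 ∧ M x' y = 1).card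

/-- Joint degree d⁻⁻ -/
noncomputable def dmm {n : ℕ} (M : Matrix (Fin n) (Fin n) ℝ) (x x' : Fin n) : ℕ :=
  (Finset.univ.filter fun y => M x y = -1 ∧ M x' y = -1).card

/-- Joint degree d⁺⁻ -/
noncomputable def dpm {n : ℕ} (M : Matrix (Fin n) (Fin n) ℝ) (x x' : Fin n) : ℕ :=
  (Finset.univ.filter fun y => M x y = 1 ∧ M x' y = -1).card

/-- Joint degree d⁻⁺ -/
noncomputable def dmp {n : ℕ} (M : Matrix (Fin n) (Fin n) ℝ) (x x' : Fin n) : ℕ :=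
  (Finset.univ.filter fun y => M x y = -1 ∧ M x' y = 1).card

noncomputable def Fd {n : ℕ} (M : Matrix (Fin n) (Fin n) ℝ) (a b : ℝ) (x x' : Fin n) : ℕ :=
  (Finset.univ.filter fun y => M x y = a ∧ M x' y = b).card

lemma Fd_eq_sum {n : ℕ} (M : Matrix (Fin n) (Fin n) ℝ) (a b : ℝ) (x x' : Fin n) :
    Fd M a b x x' =
      ∑ y, (if M x y = a then 1 else 0) * (if M x' y = b then 1 else 0) := by
  classical
  simp only [Fd, Finset.card_filter]
  exact Finset.sum_congr rfl fun y _ => by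
    by_cases h1 : M x y = a <;> by_cases h2 : M x' y = b <;> simp [h1, h2]

lemma sum4_comm {n : ℕ} (f : Fin n → Fin n → Fin n → Fin n → ℕ) :
    ∑ x : Fin n, ∑ x' : Fin n, ∑ y : Fin n, ∑ y' : Fin n, f x x' y y' =
      ∑ y : Fin n, ∑ y' : Fin n, ∑ x : Fin n, ∑ x' : Fin n, f x x' y y' := by
  calc ∑ x : Fin n, ∑ x' : Fin n, ∑ y : Fin n, ∑ y' : Fin n, f x x' y y'
      = ∑ x : Fin n, ∑ y : Fin n, ∑ x' : Fin n, ∑ y' : Fin n, f x x' y y' := by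
        exact Finset.sum_congr rfl fun x _ => Finset.sum_comm
    _ = ∑ y : Fin n, ∑ x : Fin n, ∑ x' : Fin n, ∑ y' : Fin n, f x x' y y' :=
        Finset.sum_comm
    _ = ∑ y : Fin n, ∑ x : Fin n, ∑ y' : Fin n, ∑ x' : Fin n, f x x' y y' := by
        exact Finset.sum_congr rfl fun y _ =>
          Finset.sum_congr rfl fun x _ => Finset.sum_comm
    _ = ∑ y : Fin n, ∑ y' : Fin n, ∑ x : Fin n, ∑ x' : Fin n, f x x' y y' := by
        exact Finset.sum_congr rfl fun y _ => Finset.sum_comm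

lemma key {n : ℕ} (M : Matrix (Fin n) (Fin n) ℝ) (hanti : Mᵀ = -M) (a b c d : ℝ) :
    ∑ x : Fin n, ∑ x' : Fin n, Fd M a b x x' * Fd M c d x x' =
      ∑ y : Fin n, ∑ y' : Fin n, Fd M (-a) (-c) y y' * Fd M (-b) (-d) y y' := by
  classical
  have hM : ∀ (x y : Fin n) (r : ℝ), (M x y = r) ↔ (M y x = -r) := by
    intro x y r
    have h := congrFun (congrFun hanti y) x
    simp only [transpose_apply, Matrix.neg_apply] at h
    constructor <;> intro h' <;> linarith
  calc ∑ x : Fin n, ∑ x' : Fin n, Fd M a b x x' * Fd M c d x x'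
      = ∑ x : Fin n, ∑ x' : Fin n, ∑ y : Fin n, ∑ y' : Fin n,
          ((if M x y = a then 1 else 0) * (if M x y' = c then 1 else 0)) *
          ((if M x' y = b then 1 else 0) * (if M x' y' = d then 1 else 0)) := by
        refine Finset.sum_congr rfl fun x _ => Finset.sum_congr rfl fun x' _ => ?_
        rw [Fd_eq_sum, Fd_eq_sum, Finset.sum_mul_sum]
        exact Finset.sum_congr rfl fun y _ => Finset.sum_congr rfl fun y' _ => by ring
    _ = ∑ y : Fin n, ∑ y' : Fin n, ∑ x : Fin n, ∑ x' : Fin n,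
          ((if M x y = a then 1 else 0) * (if M x y' = c then 1 else 0)) *
          ((if M x' y = b then 1 else 0) * (if M x' y' = d then 1 else 0)) :=
        sum4_comm _
    _ = ∑ y : Fin n, ∑ y' : Fin n, Fd M (-a) (-c) y y' * Fd M (-b) (-d) y y' := by
        refine Finset.sum_congr rfl fun y _ => Finset.sum_congr rfl fun y' _ => ?_
        rw [Fd_eq_sum, Fd_eq_sum, Finset.sum_mul_sum]
        refine Finset.sum_congr rfl fun x _ => Finset.sum_congr rfl fun x' _ => ?_
        have e1 : (if M x y = a then (1:ℕ) else 0) = (if M y x = -a then 1 else 0) :=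
          if_congr (hM x y a) rfl rfl
        have e2 : (if M x y' = c then (1:ℕ) else 0) = (if M y' x = -c then 1 else 0) :=
          if_congr (hM x y' c) rfl rfl
        have e3 : (if M x' y = b then (1:ℕ) else 0) = (if M y x' = -b then 1 else 0) :=
          if_congr (hM x' y b) rfl rfl
        have e4 : (if M x' y' = d then (1:ℕ) else 0) = (if M y' x' = -d then 1 else 0) :=
          if_congr (hM x' y' d) rfl rfl
        rw [e1, e2, e3, e4]

lemma natamgm (a b : ℕ) : 2 * (a * b) ≤ a ^ 2 + b ^ 2 := by
  rcases le_total a b with h | h <;> nlinarith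

theorem stmt3 {n : ℕ} (M : Matrix (Fin n) (Fin n) ℝ)
    (hanti : Mᵀ = -M)
    (hent : ∀ x y, M x y = -1 ∨ M x y = 0 ∨ M x y = 1) :
    ∑ x : Fin n, ∑ x' : Fin n, (dpp M x x' ^ 2 + dmm M x x' ^ 2) ≥
      2 * ∑ x : Fin n, ∑ x' : Fin n, dpm M x x' * dmp M x x' := by
  classical
  have hdpp : dpp M = Fd M 1 1 := rfl
  have hdmm : dmm M = Fd M (-1) (-1) := rfl
  have hdpm : dpm M = Fd M 1 (-1) := rfl
  have hswap : ∀ x x' : Fin n, dmp M x x' = dpm M x' x := by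
    intro x x'
    simp only [dmp, dpm]
    congr 1
    ext y
    simp [and_comm]
  have step1 : 2 * ∑ x : Fin n, ∑ x' : Fin n, dpm M x x' * dmp M x x' ≤
      ∑ x : Fin n, ∑ x' : Fin n, (dpm M x x' ^ 2 + dmp M x x' ^ 2) := by
    rw [Finset.mul_sum]
    refine Finset.sum_le_sum fun x _ => ?_
    rw [Finset.mul_sum]
    exact Finset.sum_le_sum fun x' _ => natamgm _ _
  have step2 : ∑ x : Fin n, ∑ x' : Fin n, dmp M x x' ^ 2 =
      ∑ x : Fin n, ∑ x' : Fin n, dpm M x x' ^ 2 := by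
    rw [Finset.sum_comm]
    exact Finset.sum_congr rfl fun x _ => Finset.sum_congr rfl fun x' _ => by rw [hswap]
  have step3 : ∑ x : Fin n, ∑ x' : Fin n, dpm M x x' ^ 2 =
      ∑ x : Fin n, ∑ x' : Fin n, dmm M x x' * dpp M x x' := by
    have hk := key M hanti 1 (-1) 1 (-1)
    simp only [neg_neg] at hk
    calc ∑ x : Fin n, ∑ x' : Fin n, dpm M x x' ^ 2
        = ∑ x : Fin n, ∑ x' : Fin n, Fd M 1 (-1) x x' * Fd M 1 (-1) x x' := by
          simp [hdpm, sq]
      _ = ∑ y : Fin n, ∑ y' : Fin n, Fd M (-1) (-1) y y' * Fd M 1 1 y y' := hk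
      _ = ∑ x : Fin n, ∑ x' : Fin n, dmm M x x' * dpp M x x' := by
          simp [hdmm, hdpp]
  have step4 : 2 * ∑ x : Fin n, ∑ x' : Fin n, dmm M x x' * dpp M x x' ≤
      ∑ x : Fin n, ∑ x' : Fin n, (dpp M x x' ^ 2 + dmm M x x' ^ 2) := by
    rw [Finset.mul_sum]
    refine Finset.sum_le_sum fun x _ => ?_
    rw [Finset.mul_sum]
    refine Finset.sum_le_sum fun x' _ => ?_
    have := natamgm (dmm M x x') (dpp M x x')
    omega
  have hsplit : ∑ x : Fin n, ∑ x' : Fin n, (dpm M x x' ^ 2 + dmp M x x' ^ 2) =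
      (∑ x : Fin n, ∑ x' : Fin n, dpm M x x' ^ 2) +
      ∑ x : Fin n, ∑ x' : Fin n, dmp M x x' ^ 2 := by
    simp [Finset.sum_add_distrib]
  calc 2 * ∑ x : Fin n, ∑ x' : Fin n, dpm M x x' * dmp M x x'
      ≤ ∑ x : Fin n, ∑ x' : Fin n, (dpm M x x' ^ 2 + dmp M x x' ^ 2) := step1
    _ = 2 * ∑ x : Fin n, ∑ x' : Fin n, dpm M x x' ^ 2 := by
        rw [hsplit, step2]; ring
    _ = 2 * ∑ x : Fin n, ∑ x' : Fin n, dmm M x x' * dpp M x x' := by rw [step3]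
    _ ≤ ∑ x : Fin n, ∑ x' : Fin n, (dpp M x x' ^ 2 + dmm M x x' ^ 2) := step4
end

section
/- For every oriented graph D: 4·hom_IV(D) ≥ hom_II(D), where hom_IV(D) = ∑_{x,x'}(d⁺⁺(x,x')² + d⁻⁻(x,x')²) and hom_II(D) = 2∑_{x,x'}(d⁺⁺(x,x')+d⁻⁻(x,x'))·(d⁺⁻(x,x')+d⁻⁺(x,x')). -/
open Finset Matrix

namespace Stmt4Aux

variable {n : ℕ}

lemma comm4 (F : Fin n → Fin n → Fin n → Fin n → ℝ) :
    ∑ x, ∑ x', ∑ y, ∑ y', F x x' y y' = ∑ y, ∑ y', ∑ x, ∑ x', F x x' y y' := by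
  conv_lhs => enter [2, x]; rw [Finset.sum_comm]
  rw [Finset.sum_comm]
  conv_lhs => enter [2, y, 2, x]; rw [Finset.sum_comm]
  conv_lhs => enter [2, y]; rw [Finset.sum_comm]

lemma swap4 (a b c d : Fin n → Fin n → ℝ) :
    ∑ x, ∑ x', (∑ y, a y x * b y x') * (∑ y, c y x * d y x')
      = ∑ y, ∑ y', (∑ x, a y x * c y' x) * (∑ x, b y x * d y' x) := by
  have e1 : ∑ x, ∑ x', (∑ y, a y x * b y x') * (∑ y, c y x * d y x')
      = ∑ x, ∑ x', ∑ y, ∑ y', (a y x * c y' x) * (b y x' * d y' x') := by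
    refine Finset.sum_congr rfl fun x _ => Finset.sum_congr rfl fun x' _ => ?_
    rw [Finset.sum_mul_sum]
    exact Finset.sum_congr rfl fun y _ => Finset.sum_congr rfl fun y' _ => by ring
  have e2 : ∑ y, ∑ y', (∑ x, a y x * c y' x) * (∑ x, b y x * d y' x)
      = ∑ y, ∑ y', ∑ x, ∑ x', (a y x * c y' x) * (b y x' * d y' x') := by
    refine Finset.sum_congr rfl fun y _ => Finset.sum_congr rfl fun y' _ => ?_
    rw [Finset.sum_mul_sum]
  rw [e1, e2, comm4]

noncomputable def ip (X Y : Fin n → Fin n → ℝ) : ℝ := ∑ y, ∑ y', X y y' * Y y y'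

lemma ip_comm (X Y : Fin n → Fin n → ℝ) : ip X Y = ip Y X := by
  unfold ip
  exact Finset.sum_congr rfl fun y _ => Finset.sum_congr rfl fun y' _ => mul_comm _ _

lemma two_ip_le (X Y : Fin n → Fin n → ℝ) : 2 * ip X Y ≤ ip X X + ip Y Y := by
  have h : (0:ℝ) ≤ ∑ y : Fin n, ∑ y' : Fin n, (X y y' - Y y y')^2 :=
    Finset.sum_nonneg fun _ _ => Finset.sum_nonneg fun _ _ => sq_nonneg _
  have e : ∑ y : Fin n, ∑ y' : Fin n, (X y y' - Y y y')^2
      = ip X X - 2 * ip X Y + ip Y Y := by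
    unfold ip
    rw [Finset.mul_sum, ← Finset.sum_sub_distrib, ← Finset.sum_add_distrib]
    refine Finset.sum_congr rfl fun y _ => ?_
    rw [Finset.mul_sum, ← Finset.sum_sub_distrib, ← Finset.sum_add_distrib]
    exact Finset.sum_congr rfl fun y' _ => by ring
  linarith [e ▸ h]

lemma master (f : Fin n → Fin n → ℝ) :
    2 * ∑ x, ∑ x', ((∑ y, f y x * f y x') + (∑ y, f x y * f x' y))
        * ((∑ y, f y x * f x' y) + (∑ y, f x y * f y x'))
      ≤ 4 * ∑ x, ∑ x', ((∑ y, f y x * f y x')^2 + (∑ y, f x y * f x' y)^2) := by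
  set G : Fin n → Fin n → ℝ := fun y y' => ∑ x, f y x * f y' x with hG
  set H : Fin n → Fin n → ℝ := fun y y' => ∑ x, f x y * f x y' with hH
  set K : Fin n → Fin n → ℝ := fun y y' => ∑ x, f y x * f x y' with hK
  have hKflip : ∀ y y' : Fin n, (∑ x, f x y * f y' x) = K y' y := fun y y' =>
    Finset.sum_congr rfl fun x _ => mul_comm _ _
  have i1 : ∑ x, ∑ x', (∑ y, f y x * f y x')^2 = ip G G := by
    have := swap4 (n := n) f f f f
    simpa [sq, ip, hG] using this
  have i2 : ∑ x, ∑ x', (∑ y, f x y * f x' y)^2 = ip H H := by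
    have := swap4 (n := n) (fun u v => f v u) (fun u v => f v u) (fun u v => f v u) (fun u v => f v u)
    simpa [sq, ip, hH] using this
  have i3 : ∑ x, ∑ x', (∑ y, f y x * f y x') * (∑ y, f y x * f x' y) = ip G K := by
    have := swap4 (n := n) f f f (fun u v => f v u)
    simpa [ip, hG, hK] using this
  have i4 : ∑ x, ∑ x', (∑ y, f y x * f y x') * (∑ y, f x y * f y x') = ip K G := by
    have := swap4 (n := n) f f (fun u v => f v u) f
    simpa [ip, hG, hK] using this
  have i5 : ∑ x, ∑ x', (∑ y, f x y * f x' y) * (∑ y, f y x * f x' y)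
      = ∑ y : Fin n, ∑ y' : Fin n, K y' y * H y y' := by
    have := swap4 (n := n) (fun u v => f v u) (fun u v => f v u) f (fun u v => f v u)
    rw [this]
    refine Finset.sum_congr rfl fun y _ => Finset.sum_congr rfl fun y' _ => ?_
    rw [hKflip y y']
  have i6 : ∑ x, ∑ x', (∑ y, f x y * f x' y) * (∑ y, f x y * f y x')
      = ∑ y : Fin n, ∑ y' : Fin n, H y y' * K y' y := by
    have := swap4 (n := n) (fun u v => f v u) (fun u v => f v u) (fun u v => f v u) f
    rw [this]
    refine Finset.sum_congr rfl fun y _ => Finset.sum_congr rfl fun y' _ => ?_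
    rw [hKflip y y']
  have i7 : ∑ y : Fin n, ∑ y' : Fin n, K y' y * H y y' = ip K H := by
    unfold ip
    rw [Finset.sum_comm]
    refine Finset.sum_congr rfl fun y _ => Finset.sum_congr rfl fun y' _ => ?_
    have hs : H y' y = H y y' := Finset.sum_congr rfl fun x _ => mul_comm _ _
    rw [hs]
  have i7' : ∑ y : Fin n, ∑ y' : Fin n, H y y' * K y' y = ip K H := by
    rw [← i7]
    exact Finset.sum_congr rfl fun y _ => Finset.sum_congr rfl fun y' _ => mul_comm _ _
  have i8 : ip K K = ip H G := by
    have h1 := swap4 (n := n) (fun u v => f v u) f (fun u v => f v u) f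
    have hl : ip K K = ∑ x, ∑ x', (∑ y, f x y * f y x') * (∑ y, f x y * f y x') := by
      simp [ip, hK]
    have hr : ip H G = ∑ y, ∑ y', (∑ x, f x y * f x y') * (∑ x, f y x * f y' x) := by
      simp [ip, hH, hG]
    rw [hl, hr, h1]
  have eL : ∑ x, ∑ x', ((∑ y, f y x * f y x') + (∑ y, f x y * f x' y))
        * ((∑ y, f y x * f x' y) + (∑ y, f x y * f y x'))
      = (∑ x, ∑ x', (∑ y, f y x * f y x') * (∑ y, f y x * f x' y))
      + (∑ x, ∑ x', (∑ y, f y x * f y x') * (∑ y, f x y * f y x'))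
      + (∑ x, ∑ x', (∑ y, f x y * f x' y) * (∑ y, f y x * f x' y))
      + (∑ x, ∑ x', (∑ y, f x y * f x' y) * (∑ y, f x y * f y x')) := by
    rw [← Finset.sum_add_distrib, ← Finset.sum_add_distrib, ← Finset.sum_add_distrib]
    refine Finset.sum_congr rfl fun x _ => ?_
    rw [← Finset.sum_add_distrib, ← Finset.sum_add_distrib, ← Finset.sum_add_distrib]
    exact Finset.sum_congr rfl fun x' _ => by ring
  have eR : ∑ x, ∑ x', ((∑ y, f y x * f y x')^2 + (∑ y, f x y * f x' y)^2)
      = (∑ x, ∑ x', (∑ y, f y x * f y x')^2) + (∑ x, ∑ x', (∑ y, f x y * f x' y)^2) := by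
    rw [← Finset.sum_add_distrib]
    exact Finset.sum_congr rfl fun x _ => by rw [← Finset.sum_add_distrib]
  rw [eL, eR, i1, i2, i3, i4, i5, i6, i7, i7']
  have a1 := two_ip_le G K
  have a2 := two_ip_le K H
  have a4 : ip K G = ip G K := ip_comm K G
  have a5 : ip H G = ip G H := ip_comm H G
  have a6 : ip G H ≤ (ip G G + ip H H) / 2 := by linarith [two_ip_le G H]
  linarith [i8]

noncomputable def Pm (M : Matrix (Fin n) (Fin n) ℝ) : Fin n → Fin n → ℝ :=
  fun y x => if M x y = 1 then 1 else 0

lemma ind_mul {p q : Prop} [Decidable p] [Decidable q] :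
    ((if p then (1:ℝ) else 0) * (if q then (1:ℝ) else 0)) = if p ∧ q then 1 else 0 := by
  by_cases hp : p <;> by_cases hq : q <;> simp [hp, hq]

lemma neg_iff {M : Matrix (Fin n) (Fin n) ℝ} (hanti : Mᵀ = -M) (x y : Fin n) :
    M x y = -1 ↔ M y x = 1 := by
  have h : M y x = -M x y := by
    have := congrFun (congrFun hanti x) y
    simpa [Matrix.transpose_apply] using this
  rw [h]
  constructor
  · intro h1; rw [h1]; norm_num
  · intro h1; linarith

lemma dpp_eq (M : Matrix (Fin n) (Fin n) ℝ) (x x' : Fin n) :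
    (dpp M x x' : ℝ) = ∑ y, Pm M y x * Pm M y x' := by
  rw [dpp, Finset.card_filter]
  push_cast
  refine Finset.sum_congr rfl fun y _ => ?_
  simp only [Pm, ind_mul]

lemma dmm_eq {M : Matrix (Fin n) (Fin n) ℝ} (hanti : Mᵀ = -M) (x x' : Fin n) :
    (dmm M x x' : ℝ) = ∑ y, Pm M x y * Pm M x' y := by
  rw [dmm, Finset.card_filter]
  push_cast
  refine Finset.sum_congr rfl fun y _ => ?_
  simp only [Pm, ind_mul]
  simp only [neg_iff hanti]

lemma dpm_eq {M : Matrix (Fin n) (Fin n) ℝ} (hanti : Mᵀ = -M) (x x' : Fin n) :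
    (dpm M x x' : ℝ) = ∑ y, Pm M y x * Pm M x' y := by
  rw [dpm, Finset.card_filter]
  push_cast
  refine Finset.sum_congr rfl fun y _ => ?_
  simp only [Pm, ind_mul]
  simp only [neg_iff hanti]

lemma dmp_eq {M : Matrix (Fin n) (Fin n) ℝ} (hanti : Mᵀ = -M) (x x' : Fin n) :
    (dmp M x x' : ℝ) = ∑ y, Pm M x y * Pm M y x' := by
  rw [dmp, Finset.card_filter]
  push_cast
  refine Finset.sum_congr rfl fun y _ => ?_
  simp only [Pm, ind_mul]
  simp only [neg_iff hanti]

end Stmt4Aux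

theorem stmt4 {n : ℕ} (M : Matrix (Fin n) (Fin n) ℝ)
    (hanti : Mᵀ = -M)
    (hent : ∀ x y, M x y = -1 ∨ M x y = 0 ∨ M x y = 1) :
    4 * ∑ x : Fin n, ∑ x' : Fin n, (dpp M x x' ^ 2 + dmm M x x' ^ 2) ≥
      2 * ∑ x : Fin n, ∑ x' : Fin n,
        (dpp M x x' + dmm M x x') * (dpm M x x' + dmp M x x') := by
  rw [ge_iff_le, ← Nat.cast_le (α := ℝ)]
  push_cast
  simp only [Stmt4Aux.dpp_eq, Stmt4Aux.dmm_eq hanti, Stmt4Aux.dpm_eq hanti,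
    Stmt4Aux.dmp_eq hanti]
  exact Stmt4Aux.master (Stmt4Aux.Pm M)
end

section
/- For every oriented graph D: 8·hom_IV(D) ≥ hom(C₄, D), where hom(C₄,D) = hom_I(D) + hom_II(D) + hom_III(D) + hom_IV(D) is the total number of homomorphic copies of the unoriented four-cycle, i.e., hom(C₄,D) = ∑_{x,x'}(a(x,x')+b(x,x'))² with a = d⁺⁺+d⁻⁻ and b = d⁺⁻+d⁻⁺. -/
open Finset Matrix

private lemma sum4_comm_s5 {n : ℕ} (F : Fin n → Fin n → Fin n → Fin n → ℕ) :
    ∑ a : Fin n, ∑ b : Fin n, ∑ c : Fin n, ∑ d : Fin n, F a b c d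
      = ∑ c : Fin n, ∑ d : Fin n, ∑ a : Fin n, ∑ b : Fin n, F a b c d := by
  have h1 : ∀ a : Fin n, ∑ b : Fin n, ∑ c : Fin n, ∑ d : Fin n, F a b c d
      = ∑ c : Fin n, ∑ b : Fin n, ∑ d : Fin n, F a b c d := fun a => Finset.sum_comm
  have h2 : ∀ a c : Fin n, ∑ b : Fin n, ∑ d : Fin n, F a b c d
      = ∑ d : Fin n, ∑ b : Fin n, F a b c d := fun a c => Finset.sum_comm
  simp_rw [h1, h2]
  rw [Finset.sum_comm]
  exact Finset.sum_congr rfl fun c _ => Finset.sum_comm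

private lemma key_reindex {n : ℕ} (f g : Fin n → Fin n → ℕ) :
    ∑ x : Fin n, ∑ x' : Fin n, (∑ y : Fin n, f x y * g y x') ^ 2
      = ∑ y : Fin n, ∑ y' : Fin n,
          (∑ x : Fin n, f x y * f x y') * (∑ x' : Fin n, g y x' * g y' x') := by
  simp_rw [sq, Finset.sum_mul_sum]
  rw [sum4_comm_s5 (fun x x' y y' => (f x y * g y x') * (f x y' * g y' x'))]
  refine Finset.sum_congr rfl fun y _ => Finset.sum_congr rfl fun y' _ => ?_
  refine Finset.sum_congr rfl fun x _ => Finset.sum_congr rfl fun x' _ => ?_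
  ring

theorem stmt5 {n : ℕ} (M : Matrix (Fin n) (Fin n) ℝ)
    (hanti : Mᵀ = -M)
    (hent : ∀ x y, M x y = -1 ∨ M x y = 0 ∨ M x y = 1) :
    8 * ∑ x : Fin n, ∑ x' : Fin n, (dpp M x x' ^ 2 + dmm M x x' ^ 2) ≥
      ∑ x : Fin n, ∑ x' : Fin n,
        ((dpp M x x' + dmm M x x') + (dpm M x x' + dmp M x x')) ^ 2 := by
  classical
  set e : Fin n → Fin n → ℕ := fun x y => if M x y = 1 then 1 else 0 with he
  have hneg : ∀ x y : Fin n, (M x y = -1) ↔ (M y x = 1) := by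
    intro x y
    have h := congrFun (congrFun hanti x) y
    simp only [Matrix.transpose_apply, Matrix.neg_apply] at h
    constructor
    · intro hh; rw [hh] at h; linarith
    · intro hh; rw [hh] at h; linarith
  have hpp : ∀ x x', dpp M x x' = ∑ y, e x y * e x' y := by
    intro x x'
    rw [dpp, Finset.card_filter]
    refine Finset.sum_congr rfl fun y _ => ?_
    by_cases h1 : M x y = 1 <;> by_cases h2 : M x' y = 1 <;> simp [he, h1, h2]
  have hmm : ∀ x x', dmm M x x' = ∑ y, e y x * e y x' := by
    intro x x'
    rw [dmm, Finset.card_filter]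
    refine Finset.sum_congr rfl fun y _ => ?_
    simp only [hneg]
    by_cases h1 : M y x = 1 <;> by_cases h2 : M y x' = 1 <;> simp [he, h1, h2]
  have hpm : ∀ x x', dpm M x x' = ∑ y, e x y * e y x' := by
    intro x x'
    rw [dpm, Finset.card_filter]
    refine Finset.sum_congr rfl fun y _ => ?_
    simp only [hneg]
    by_cases h1 : M x y = 1 <;> by_cases h2 : M y x' = 1 <;> simp [he, h1, h2]
  have hmp : ∀ x x', dmp M x x' = ∑ y, e y x * e x' y := by
    intro x x'
    rw [dmp, Finset.card_filter]
    refine Finset.sum_congr rfl fun y _ => ?_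
    simp only [hneg]
    by_cases h1 : M y x = 1 <;> by_cases h2 : M x' y = 1 <;> simp [he, h1, h2]
  -- The two reindexing identities
  have hQ : ∑ x : Fin n, ∑ x' : Fin n, dpm M x x' ^ 2
      = ∑ x : Fin n, ∑ x' : Fin n, dpp M x x' * dmm M x x' := by
    simp_rw [hpm, hpp, hmm]
    rw [key_reindex e e]
    exact Finset.sum_congr rfl fun y _ => Finset.sum_congr rfl fun y' _ => mul_comm _ _
  have hR : ∑ x : Fin n, ∑ x' : Fin n, dmp M x x' ^ 2
      = ∑ x : Fin n, ∑ x' : Fin n, dpp M x x' * dmm M x x' := by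
    simp_rw [hmp, hpp, hmm]
    rw [key_reindex (fun x y => e y x) (fun y x' => e x' y)]
  -- pointwise Cauchy-Schwarz
  have pointwise : ∀ a b c d : ℕ,
      ((a + b) + (c + d)) ^ 2 ≤ 4 * (a ^ 2 + b ^ 2) + 4 * c ^ 2 + 4 * d ^ 2 := by
    intro a b c d
    zify
    nlinarith [sq_nonneg ((a : ℤ) - b), sq_nonneg ((a : ℤ) - c), sq_nonneg ((a : ℤ) - d),
      sq_nonneg ((b : ℤ) - c), sq_nonneg ((b : ℤ) - d), sq_nonneg ((c : ℤ) - d)]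
  have amgm : ∀ a b : ℕ, 2 * (a * b) ≤ a ^ 2 + b ^ 2 := by
    intro a b
    zify
    nlinarith [sq_nonneg ((a : ℤ) - b)]
  set S := ∑ x : Fin n, ∑ x' : Fin n, (dpp M x x' ^ 2 + dmm M x x' ^ 2) with hS
  have hPM : 2 * (∑ x : Fin n, ∑ x' : Fin n, dpp M x x' * dmm M x x') ≤ S := by
    rw [Finset.mul_sum]
    refine Finset.sum_le_sum fun x _ => ?_
    rw [Finset.mul_sum]
    exact Finset.sum_le_sum fun x' _ => amgm _ _
  calc ∑ x : Fin n, ∑ x' : Fin n,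
        ((dpp M x x' + dmm M x x') + (dpm M x x' + dmp M x x')) ^ 2
      ≤ ∑ x : Fin n, ∑ x' : Fin n,
        (4 * (dpp M x x' ^ 2 + dmm M x x' ^ 2) + 4 * dpm M x x' ^ 2 + 4 * dmp M x x' ^ 2) := by
        exact Finset.sum_le_sum fun x _ => Finset.sum_le_sum fun x' _ => pointwise _ _ _ _
    _ = 4 * S + 4 * (∑ x : Fin n, ∑ x' : Fin n, dpm M x x' ^ 2)
          + 4 * (∑ x : Fin n, ∑ x' : Fin n, dmp M x x' ^ 2) := by
        simp only [hS, Finset.sum_add_distrib, ← Finset.mul_sum]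
    _ = 4 * S + 4 * (2 * (∑ x : Fin n, ∑ x' : Fin n, dpp M x x' * dmm M x x')) := by
        rw [hQ, hR]; ring
    _ ≤ 4 * S + 4 * S := by
        exact Nat.add_le_add_left (Nat.mul_le_mul_left 4 hPM) _
    _ = 8 * S := by ring
end

section
/- Let D be an oriented graph on n vertices satisfying: e⃗(A,B) − e⃗(B,A) ≤ γn² for all A,B ⊆ V. Let H be a partially oriented graph on k vertices with e⃗(H) oriented edges. Then |hom(H,D) − hom(H̄,D)/2^{e⃗(H)}| ≤ (1 − 2^{−e⃗(H)})·γ·n^k, where H̄ is the underlying graph of H and hom counts homomorphisms (maps V(H) → V(D) sending oriented edges to arcs with matching orientation and unoriented edges to edges of the underlying graph of D). -/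
open Finset Matrix

/-- Number of arcs from `A` to `B` in the oriented graph with adjacency matrix `M`. -/
noncomputable def earr {n : ℕ} (M : Matrix (Fin n) (Fin n) ℝ)
    (A B : Finset (Fin n)) : ℕ :=
  ((A ×ˢ B).filter fun p => M p.1 p.2 = 1).card

/-- The number of homomorphisms from the partially oriented graph `(arc, edge)` on `Fin k`
into the oriented graph with adjacency matrix `M`: oriented edges must map to arcs with
matching orientation and unoriented edges to edges of the underlying graph. -/
noncomputable def homPO {n k : ℕ} (M : Matrix (Fin n) (Fin n) ℝ)
    (arc edge : Fin k → Fin k → Prop) : ℕ :=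
  Nat.card {f : Fin k → Fin n //
    (∀ x y, arc x y → M (f x) (f y) = 1) ∧
    (∀ x y, edge x y → M (f x) (f y) ≠ 0)}

/-- The number of homomorphisms from the underlying graph of the partially oriented graph
`(arc, edge)` into the underlying graph of the oriented graph with adjacency matrix `M`. -/
noncomputable def homUnder {n k : ℕ} (M : Matrix (Fin n) (Fin n) ℝ)
    (arc edge : Fin k → Fin k → Prop) : ℕ :=
  Nat.card {f : Fin k → Fin n //
    ∀ x y, (arc x y ∨ edge x y) → M (f x) (f y) ≠ 0}

/-- The number of oriented edges of the partially oriented graph `(arc, edge)`. -/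
noncomputable def numArcs {k : ℕ} (arc : Fin k → Fin k → Prop) : ℕ :=
  Nat.card {p : Fin k × Fin k // arc p.1 p.2}

noncomputable def cnt {α : Type*} [Fintype α] (p : α → Prop) : ℕ :=
  (@Finset.filter α p (Classical.decPred p) Finset.univ).card

lemma cnt_eq {α : Type*} [Fintype α] (p : α → Prop) [DecidablePred p] :
    cnt p = (Finset.univ.filter p).card := by
  unfold cnt; congr!

lemma natCard_eq_cnt {α : Type*} [Fintype α] (p : α → Prop) :
    Nat.card {x // p x} = cnt p := by
  classical
  rw [Nat.card_eq_fintype_card, cnt_eq]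
  exact Fintype.card_subtype p

lemma cnt_congr {α : Type*} [Fintype α] {p q : α → Prop} (h : ∀ x, p x ↔ q x) :
    cnt p = cnt q := by
  classical
  rw [cnt_eq, cnt_eq]
  congr 1
  ext x
  simp [h x]

lemma cnt_split {α : Type*} [Fintype α] {p q rr : α → Prop}
    (h1 : ∀ x, rr x ↔ p x ∨ q x) (h2 : ∀ x, ¬ (p x ∧ q x)) :
    cnt rr = cnt p + cnt q := by
  classical
  rw [cnt_eq, cnt_eq, cnt_eq, ← Finset.card_union_of_disjoint]
  · congr 1; ext x; simp [h1 x]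
  · rw [Finset.disjoint_left]
    intro x hx hx'
    simp only [Finset.mem_filter] at hx hx'
    exact h2 x ⟨hx.2, hx'.2⟩


lemma flip_bound {n k : ℕ} (hn : 0 < n) (M : Matrix (Fin n) (Fin n) ℝ)
    (γ : ℝ) (hγ : 0 ≤ γ)
    (hP6 : ∀ A B : Finset (Fin n), (earr M A B : ℝ) - earr M B A ≤ γ * n ^ 2)
    (r e : Fin k → Fin k → Prop) (a b : Fin k) (hab : a ≠ b)
    (hno : ∀ x y, (x = a ∨ x = b) → (y = a ∨ y = b) → ¬ r x y ∧ ¬ e x y) :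
    (cnt (fun f : Fin k → Fin n =>
        ((∀ x y, r x y → M (f x) (f y) = 1) ∧ (∀ x y, e x y → M (f x) (f y) ≠ 0))
        ∧ M (f a) (f b) = 1) : ℝ)
      - (cnt (fun f : Fin k → Fin n =>
        ((∀ x y, r x y → M (f x) (f y) = 1) ∧ (∀ x y, e x y → M (f x) (f y) ≠ 0))
        ∧ M (f b) (f a) = 1) : ℝ) ≤ γ * n ^ k := by
  classical
  set i0 : Fin n := ⟨0, hn⟩ with hi0
  set Q : (Fin k → Fin n) → Prop := fun f =>
    (∀ x y, r x y → M (f x) (f y) = 1) ∧ (∀ x y, e x y → M (f x) (f y) ≠ 0) with hQdef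
  set π : (Fin k → Fin n) → (Fin k → Fin n) := fun f =>
    Function.update (Function.update f a i0) b i0 with hπdef
  have hπa : ∀ f, π f a = i0 := by
    intro f
    simp [hπdef, Function.update_apply, hab]
  have hπb : ∀ f, π f b = i0 := by
    intro f
    simp [hπdef, Function.update_apply]
  have hπo : ∀ f x, x ≠ a → x ≠ b → π f x = f x := by
    intro f x hxa hxb
    simp [hπdef, Function.update_apply, hxa, hxb]
  set Q0 : (Fin k → Fin n) → Prop := fun g =>
    ∀ x y, x ≠ a → x ≠ b → y ≠ a → y ≠ b →
      ((r x y → M (g x) (g y) = 1) ∧ (e x y → M (g x) (g y) ≠ 0)) with hQ0def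
  set QA : (Fin k → Fin n) → Fin n → Prop := fun g u =>
    ∀ y, y ≠ a → y ≠ b →
      ((r a y → M u (g y) = 1) ∧ (e a y → M u (g y) ≠ 0) ∧
       (r y a → M (g y) u = 1) ∧ (e y a → M (g y) u ≠ 0)) with hQAdef
  set QB : (Fin k → Fin n) → Fin n → Prop := fun g v =>
    ∀ y, y ≠ a → y ≠ b →
      ((r b y → M v (g y) = 1) ∧ (e b y → M v (g y) ≠ 0) ∧
       (r y b → M (g y) v = 1) ∧ (e y b → M (g y) v ≠ 0)) with hQBdef
  have hdecomp : ∀ f, Q f ↔ Q0 (π f) ∧ QA (π f) (f a) ∧ QB (π f) (f b) := by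
    intro f
    constructor
    · rintro ⟨h1, h2⟩
      refine ⟨?_, ?_, ?_⟩
      · intro x y hxa hxb hya hyb
        rw [hπo f x hxa hxb, hπo f y hya hyb]
        exact ⟨h1 x y, h2 x y⟩
      · intro y hya hyb
        rw [hπo f y hya hyb]
        exact ⟨h1 a y, h2 a y, h1 y a, h2 y a⟩
      · intro y hya hyb
        rw [hπo f y hya hyb]
        exact ⟨h1 b y, h2 b y, h1 y b, h2 y b⟩
    · rintro ⟨h0, hA, hB⟩
      have key : ∀ x y, (r x y → M (f x) (f y) = 1) ∧ (e x y → M (f x) (f y) ≠ 0) := by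
        intro x y
        by_cases hxa : x = a
        · by_cases hya : y = a
          · exact ⟨fun h => absurd h (hno x y (Or.inl hxa) (Or.inl hya)).1,
                   fun h => absurd h (hno x y (Or.inl hxa) (Or.inl hya)).2⟩
          · by_cases hyb : y = b
            · exact ⟨fun h => absurd h (hno x y (Or.inl hxa) (Or.inr hyb)).1,
                     fun h => absurd h (hno x y (Or.inl hxa) (Or.inr hyb)).2⟩
            · obtain ⟨c1, c2, _, _⟩ := hA y hya hyb
              rw [hπo f y hya hyb] at c1 c2
              rw [hxa]
              exact ⟨c1, c2⟩
        · by_cases hxb : x = b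
          · by_cases hya : y = a
            · exact ⟨fun h => absurd h (hno x y (Or.inr hxb) (Or.inl hya)).1,
                     fun h => absurd h (hno x y (Or.inr hxb) (Or.inl hya)).2⟩
            · by_cases hyb : y = b
              · exact ⟨fun h => absurd h (hno x y (Or.inr hxb) (Or.inr hyb)).1,
                       fun h => absurd h (hno x y (Or.inr hxb) (Or.inr hyb)).2⟩
              · obtain ⟨c1, c2, _, _⟩ := hB y hya hyb
                rw [hπo f y hya hyb] at c1 c2
                rw [hxb]
                exact ⟨c1, c2⟩
          · by_cases hya : y = a
            · obtain ⟨_, _, c3, c4⟩ := hA x hxa hxb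
              rw [hπo f x hxa hxb] at c3 c4
              rw [hya]
              exact ⟨c3, c4⟩
            · by_cases hyb : y = b
              · obtain ⟨_, _, c3, c4⟩ := hB x hxa hxb
                rw [hπo f x hxa hxb] at c3 c4
                rw [hyb]
                exact ⟨c3, c4⟩
              · have := h0 x y hxa hxb hya hyb
                rw [hπo f x hxa hxb, hπo f y hya hyb] at this
                exact this
      exact ⟨fun x y => (key x y).1, fun x y => (key x y).2⟩
  -- building a function from (g, u, v)
  have hbuild : ∀ (g : Fin k → Fin n) (u v : Fin n), g a = i0 → g b = i0 →
      (Function.update (Function.update g b v) a u) a = u ∧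
      (Function.update (Function.update g b v) a u) b = v ∧
      π (Function.update (Function.update g b v) a u) = g := by
    intro g u v hga hgb
    refine ⟨by simp [Function.update_apply], by simp [Function.update_apply, Ne.symm hab], ?_⟩
    funext x
    by_cases hxb : x = b
    · subst hxb; rw [hπb]; exact hgb.symm
    · by_cases hxa : x = a
      · subst hxa; rw [hπa]; exact hga.symm
      · rw [hπo _ x hxa hxb]
        simp [Function.update_apply, hxa, hxb]
  set S : Finset (Fin k → Fin n) := Finset.univ.filter (fun g => g a = i0 ∧ g b = i0) with hSdef
  have hmemS : ∀ f, π f ∈ S := by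
    intro f
    simp [hSdef, hπa, hπb]
  set p1 : (Fin k → Fin n) → Prop := fun f => Q f ∧ M (f a) (f b) = 1 with hp1def
  set p2 : (Fin k → Fin n) → Prop := fun f => Q f ∧ M (f b) (f a) = 1 with hp2def
  have hsum1 : (Finset.univ.filter p1).card
      = ∑ g ∈ S, ((Finset.univ.filter p1).filter (fun f => π f = g)).card :=
    Finset.card_eq_sum_card_fiberwise (fun f _ => hmemS f)
  have hsum2 : (Finset.univ.filter p2).card
      = ∑ g ∈ S, ((Finset.univ.filter p2).filter (fun f => π f = g)).card :=
    Finset.card_eq_sum_card_fiberwise (fun f _ => hmemS f)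
  have hsumfull : (Finset.univ : Finset (Fin k → Fin n)).card
      = ∑ g ∈ S, (Finset.univ.filter (fun f => π f = g)).card := by
    have := Finset.card_eq_sum_card_fiberwise (s := (Finset.univ : Finset (Fin k → Fin n)))
      (t := S) (f := π) (fun f _ => hmemS f)
    simpa using this
  -- per-fiber identification, positive case
  have hfib1 : ∀ g ∈ S, Q0 g →
      ((Finset.univ.filter p1).filter (fun f => π f = g)).card
        = earr M (Finset.univ.filter (QA g)) (Finset.univ.filter (QB g)) := by
    intro g hgS hg0
    simp only [hSdef, Finset.mem_filter, Finset.mem_univ, true_and] at hgS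
    unfold earr
    apply Finset.card_bij (fun f _ => (f a, f b))
    · intro f hf
      simp only [Finset.mem_filter, Finset.mem_univ, true_and, hp1def] at hf
      obtain ⟨⟨hQf, hM⟩, hπf⟩ := hf
      rw [hdecomp] at hQf
      rw [hπf] at hQf
      simp only [Finset.mem_filter, Finset.mem_product, Finset.mem_univ, true_and]
      exact ⟨⟨hQf.2.1, hQf.2.2⟩, hM⟩
    · intro f hf f' hf' heq
      simp only [Finset.mem_filter] at hf hf'
      have h1 := hf.2
      have h2 := hf'.2
      have ha : f a = f' a := congrArg Prod.fst heq
      have hb : f b = f' b := congrArg Prod.snd heq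
      funext x
      by_cases hxa : x = a
      · subst hxa; exact ha
      · by_cases hxb : x = b
        · subst hxb; exact hb
        · rw [← hπo f x hxa hxb, ← hπo f' x hxa hxb, h1, h2]
    · rintro ⟨u, v⟩ hp
      simp only [Finset.mem_filter, Finset.mem_product, Finset.mem_univ, true_and] at hp
      obtain ⟨⟨hu, hv⟩, hM⟩ := hp
      refine ⟨Function.update (Function.update g b v) a u, ?_, ?_⟩
      · obtain ⟨hfa, hfb, hπf⟩ := hbuild g u v hgS.1 hgS.2
        simp only [Finset.mem_filter, Finset.mem_univ, true_and, hp1def]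
        refine ⟨⟨?_, ?_⟩, hπf⟩
        · rw [hdecomp, hπf, hfa, hfb]
          exact ⟨hg0, hu, hv⟩
        · rw [hfa, hfb]; exact hM
      · obtain ⟨hfa, hfb, _⟩ := hbuild g u v hgS.1 hgS.2
        rw [hfa, hfb]
  have hfib2 : ∀ g ∈ S, Q0 g →
      ((Finset.univ.filter p2).filter (fun f => π f = g)).card
        = earr M (Finset.univ.filter (QB g)) (Finset.univ.filter (QA g)) := by
    intro g hgS hg0
    simp only [hSdef, Finset.mem_filter, Finset.mem_univ, true_and] at hgS
    unfold earr
    apply Finset.card_bij (fun f _ => (f b, f a))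
    · intro f hf
      simp only [Finset.mem_filter, Finset.mem_univ, true_and, hp2def] at hf
      obtain ⟨⟨hQf, hM⟩, hπf⟩ := hf
      rw [hdecomp] at hQf
      rw [hπf] at hQf
      simp only [Finset.mem_filter, Finset.mem_product, Finset.mem_univ, true_and]
      exact ⟨⟨hQf.2.2, hQf.2.1⟩, hM⟩
    · intro f hf f' hf' heq
      simp only [Finset.mem_filter] at hf hf'
      have h1 := hf.2
      have h2 := hf'.2
      have hb : f b = f' b := congrArg Prod.fst heq
      have ha : f a = f' a := congrArg Prod.snd heq
      funext x
      by_cases hxa : x = a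
      · subst hxa; exact ha
      · by_cases hxb : x = b
        · subst hxb; exact hb
        · rw [← hπo f x hxa hxb, ← hπo f' x hxa hxb, h1, h2]
    · rintro ⟨v, u⟩ hp
      simp only [Finset.mem_filter, Finset.mem_product, Finset.mem_univ, true_and] at hp
      obtain ⟨⟨hv, hu⟩, hM⟩ := hp
      refine ⟨Function.update (Function.update g b v) a u, ?_, ?_⟩
      · obtain ⟨hfa, hfb, hπf⟩ := hbuild g u v hgS.1 hgS.2
        simp only [Finset.mem_filter, Finset.mem_univ, true_and, hp2def]
        refine ⟨⟨?_, ?_⟩, hπf⟩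
        · rw [hdecomp, hπf, hfa, hfb]
          exact ⟨hg0, hu, hv⟩
        · rw [hfa, hfb]; exact hM
      · obtain ⟨hfa, hfb, _⟩ := hbuild g u v hgS.1 hgS.2
        rw [hfa, hfb]
  -- empty fibers when Q0 fails
  have hempty1 : ∀ g, ¬ Q0 g →
      ((Finset.univ.filter p1).filter (fun f => π f = g)).card = 0 := by
    intro g hg0
    rw [Finset.card_eq_zero, Finset.eq_empty_iff_forall_notMem]
    intro f hf
    simp only [Finset.mem_filter, Finset.mem_univ, true_and] at hf
    have hQf := hf.1.1
    rw [hdecomp] at hQf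
    rw [hf.2] at hQf
    exact hg0 hQf.1
  have hempty2 : ∀ g, ¬ Q0 g →
      ((Finset.univ.filter p2).filter (fun f => π f = g)).card = 0 := by
    intro g hg0
    rw [Finset.card_eq_zero, Finset.eq_empty_iff_forall_notMem]
    intro f hf
    simp only [Finset.mem_filter, Finset.mem_univ, true_and] at hf
    have hQf := hf.1.1
    rw [hdecomp] at hQf
    rw [hf.2] at hQf
    exact hg0 hQf.1
  -- full fibers have n^2 elements
  have hfull : ∀ g ∈ S, (Finset.univ.filter (fun f => π f = g)).card = n * n := by
    intro g hgS
    simp only [hSdef, Finset.mem_filter, Finset.mem_univ, true_and] at hgS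
    have : (Finset.univ.filter (fun f => π f = g)).card
        = ((Finset.univ ×ˢ Finset.univ : Finset (Fin n × Fin n))).card := by
      apply Finset.card_bij (fun f _ => (f a, f b))
      · intro f hf
        simp
      · intro f hf f' hf' heq
        simp only [Finset.mem_filter, Finset.mem_univ, true_and] at hf hf'
        have ha : f a = f' a := congrArg Prod.fst heq
        have hb : f b = f' b := congrArg Prod.snd heq
        funext x
        by_cases hxa : x = a
        · subst hxa; exact ha
        · by_cases hxb : x = b
          · subst hxb; exact hb
          · rw [← hπo f x hxa hxb, ← hπo f' x hxa hxb, hf, hf']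
      · rintro ⟨u, v⟩ _
        obtain ⟨hfa, hfb, hπf⟩ := hbuild g u v hgS.1 hgS.2
        refine ⟨Function.update (Function.update g b v) a u, ?_, ?_⟩
        · simp [hπf]
        · rw [hfa, hfb]
    rw [this, Finset.card_product, Finset.card_univ, Fintype.card_fin]
  -- now put it together in ℝ
  rw [cnt_eq, cnt_eq]
  rw [hsum1, hsum2]
  push_cast
  rw [← Finset.sum_sub_distrib]
  have hbound : ∀ g ∈ S,
      (((Finset.univ.filter p1).filter (fun f => π f = g)).card : ℝ)
        - ((Finset.univ.filter p2).filter (fun f => π f = g)).card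
      ≤ γ * ((Finset.univ.filter (fun f => π f = g)).card : ℝ) := by
    intro g hgS
    rw [hfull g hgS]
    by_cases hg0 : Q0 g
    · rw [hfib1 g hgS hg0, hfib2 g hgS hg0]
      have := hP6 (Finset.univ.filter (QA g)) (Finset.univ.filter (QB g))
      calc (earr M (Finset.univ.filter (QA g)) (Finset.univ.filter (QB g)) : ℝ)
            - earr M (Finset.univ.filter (QB g)) (Finset.univ.filter (QA g))
          ≤ γ * n ^ 2 := this
        _ = γ * ((n * n : ℕ) : ℝ) := by push_cast; ring
    · rw [hempty1 g hg0, hempty2 g hg0]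
      simp
      positivity
  calc ∑ g ∈ S, ((((Finset.univ.filter p1).filter (fun f => π f = g)).card : ℝ)
          - ((Finset.univ.filter p2).filter (fun f => π f = g)).card)
      ≤ ∑ g ∈ S, γ * ((Finset.univ.filter (fun f => π f = g)).card : ℝ) :=
        Finset.sum_le_sum hbound
    _ = γ * ∑ g ∈ S, ((Finset.univ.filter (fun f => π f = g)).card : ℝ) := by
        rw [Finset.mul_sum]
    _ = γ * ((Finset.univ : Finset (Fin k → Fin n)).card : ℝ) := by
        rw [hsumfull]; push_cast; ring
    _ = γ * n ^ k := by
        rw [Finset.card_univ, Fintype.card_fun, Fintype.card_fin, Fintype.card_fin]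
        push_cast; ring

lemma main_aux {n k : ℕ} (M : Matrix (Fin n) (Fin n) ℝ)
    (hanti : Mᵀ = -M)
    (hent : ∀ x y, M x y = -1 ∨ M x y = 0 ∨ M x y = 1)
    (γ : ℝ)
    (hP6 : ∀ A B : Finset (Fin n), (earr M A B : ℝ) - earr M B A ≤ γ * n ^ 2) :
    ∀ (m : ℕ) (arc edge : Fin k → Fin k → Prop),
      (∀ x y, edge x y → edge y x) → (∀ x, ¬ edge x x) → (∀ x, ¬ arc x x) →
      (∀ x y, arc x y → ¬ arc y x) → (∀ x y, arc x y → ¬ edge x y) →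
      numArcs arc = m →
      |(homPO M arc edge : ℝ) - (homUnder M arc edge : ℝ) / 2 ^ m| ≤
        (1 - (1:ℝ)/2^m) * γ * n ^ k := by
  have haM : ∀ u v : Fin n, M v u = - M u v := by
    intro u v
    have := congrFun (congrFun hanti u) v
    simpa [Matrix.transpose_apply, Matrix.neg_apply] using this
  intro m
  induction m with
  | zero =>
    intro arc edge hes hei hai haa hd hm
    have hemp : ∀ x y, ¬ arc x y := by
      have h0 : Nat.card {p : Fin k × Fin k // arc p.1 p.2} = 0 := hm
      rw [Nat.card_eq_zero] at h0
      rcases h0 with h | h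
      · intro x y hxy
        exact h.elim' ⟨(x, y), hxy⟩
      · exact absurd h (not_infinite_iff_finite.mpr inferInstance)
    have heq : homPO M arc edge = homUnder M arc edge := by
      unfold homPO homUnder
      apply Nat.card_congr
      apply Equiv.subtypeEquivRight
      intro f
      constructor
      · rintro ⟨h1, h2⟩ x y (h | h)
        · exact absurd h (hemp x y)
        · exact h2 x y h
      · intro h
        exact ⟨fun x y h' => absurd h' (hemp x y), fun x y h' => h x y (Or.inr h')⟩
    rw [heq]
    simp
  | succ m ih =>
    intro arc edge hes hei hai haa hd hm
    have hpos : 0 < Nat.card {p : Fin k × Fin k // arc p.1 p.2} := by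
      have : numArcs arc = m + 1 := hm
      unfold numArcs at this
      omega
    rw [Nat.card_pos_iff] at hpos
    obtain ⟨⟨⟨⟨a, b⟩, hab_arc⟩⟩, -⟩ := hpos
    simp only at hab_arc
    have hab : a ≠ b := by
      rintro rfl
      exact hai a hab_arc
    by_cases hn : 0 < n
    case neg =>
      -- n = 0, k > 0
      have hn0 : n = 0 := by omega
      have hk : k ≠ 0 := fun h => Fin.elim0 (h ▸ a)
      have hie : IsEmpty (Fin k → Fin n) := by
        subst hn0
        have : Nonempty (Fin k) := ⟨a⟩
        infer_instance
      have h1 : homPO M arc edge = 0 := by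
        unfold homPO
        exact Nat.card_of_isEmpty
      have h2 : homUnder M arc edge = 0 := by
        unfold homUnder
        exact Nat.card_of_isEmpty
      rw [h1, h2, hn0]
      rw [show ((0:ℕ):ℝ) ^ k = 0 from by rw [Nat.cast_zero]; exact zero_pow hk]
      norm_num
    case pos =>
      have hnR : (0:ℝ) < n := by exact_mod_cast hn
      have hγ : 0 ≤ γ := by
        have h00 := hP6 ∅ ∅
        simp [earr] at h00
        have hn2 : (0:ℝ) < (n:ℝ) ^ 2 := by positivity
        nlinarith
      -- modified relations
      set arc' : Fin k → Fin k → Prop := fun x y => arc x y ∧ ¬(x = a ∧ y = b) with harc'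
      set edge' : Fin k → Fin k → Prop :=
        fun x y => edge x y ∨ (x = a ∧ y = b) ∨ (x = b ∧ y = a) with hedge'
      have hno : ∀ x y, (x = a ∨ x = b) → (y = a ∨ y = b) → ¬ arc' x y ∧ ¬ edge x y := by
        intro x y hx hy
        constructor
        · rintro ⟨h1, h2⟩
          rcases hx with hx | hx <;> rcases hy with hy | hy <;> rw [hx, hy] at h1
          · exact hai a h1
          · exact h2 ⟨hx, hy⟩
          · exact haa a b hab_arc h1
          · exact hai b h1
        · intro h1
          rcases hx with hx | hx <;> rcases hy with hy | hy <;> rw [hx, hy] at h1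
          · exact hei a h1
          · exact hd a b hab_arc h1
          · exact hd a b hab_arc (hes b a h1)
          · exact hei b h1
      -- the two counts
      set X : ℕ := cnt (fun f : Fin k → Fin n =>
        ((∀ x y, arc' x y → M (f x) (f y) = 1) ∧ (∀ x y, edge x y → M (f x) (f y) ≠ 0))
        ∧ M (f a) (f b) = 1) with hXdef
      set Y : ℕ := cnt (fun f : Fin k → Fin n =>
        ((∀ x y, arc' x y → M (f x) (f y) = 1) ∧ (∀ x y, edge x y → M (f x) (f y) ≠ 0))
        ∧ M (f b) (f a) = 1) with hYdef
      have hX : homPO M arc edge = X := by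
        unfold homPO
        rw [natCard_eq_cnt]
        apply cnt_congr
        intro f
        constructor
        · rintro ⟨h1, h2⟩
          exact ⟨⟨fun x y h => h1 x y h.1, h2⟩, h1 a b hab_arc⟩
        · rintro ⟨⟨h1, h2⟩, h3⟩
          refine ⟨?_, h2⟩
          intro x y h
          by_cases hc : x = a ∧ y = b
          · obtain ⟨rfl, rfl⟩ := hc
            exact h3
          · exact h1 x y ⟨h, hc⟩
      have hZ : homPO M arc' edge' = X + Y := by
        unfold homPO
        rw [natCard_eq_cnt]
        apply cnt_split
        · intro f
          constructor
          · rintro ⟨h1, h2⟩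
            have hQr : (∀ x y, arc' x y → M (f x) (f y) = 1) ∧
                (∀ x y, edge x y → M (f x) (f y) ≠ 0) :=
              ⟨h1, fun x y h => h2 x y (Or.inl h)⟩
            have hne : M (f a) (f b) ≠ 0 := h2 a b (Or.inr (Or.inl ⟨rfl, rfl⟩))
            rcases hent (f a) (f b) with h | h | h
            · right
              refine ⟨hQr, ?_⟩
              rw [haM (f a) (f b), h]
              norm_num
            · exact absurd h hne
            · exact Or.inl ⟨hQr, h⟩
          · rintro (⟨⟨h1, h2⟩, hM1⟩ | ⟨⟨h1, h2⟩, hM1⟩)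
            · refine ⟨h1, ?_⟩
              rintro x y (h | hc | hc)
              · exact h2 x y h
              · rw [hc.1, hc.2, hM1]; norm_num
              · rw [hc.1, hc.2, haM (f a) (f b), hM1]; norm_num
            · refine ⟨h1, ?_⟩
              rintro x y (h | hc | hc)
              · exact h2 x y h
              · rw [hc.1, hc.2, haM (f b) (f a), hM1]; norm_num
              · rw [hc.1, hc.2, hM1]; norm_num
        · rintro f ⟨⟨-, hM1⟩, ⟨-, hM2⟩⟩
          rw [haM (f a) (f b), hM1] at hM2
          norm_num at hM2
      have hW : homUnder M arc' edge' = homUnder M arc edge := by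
        unfold homUnder
        apply Nat.card_congr
        apply Equiv.subtypeEquivRight
        intro f
        constructor
        · intro h x y hxy
          rcases hxy with hxy | hxy
          · by_cases hc : x = a ∧ y = b
            · obtain ⟨rfl, rfl⟩ := hc
              exact h x y (Or.inr (Or.inr (Or.inl ⟨rfl, rfl⟩)))
            · exact h x y (Or.inl ⟨hxy, hc⟩)
          · exact h x y (Or.inr (Or.inl hxy))
        · intro h x y hxy
          rcases hxy with hxy | hxy | hc | hc
          · exact h x y (Or.inl hxy.1)
          · exact h x y (Or.inr hxy)
          · rw [hc.1, hc.2]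
            exact h a b (Or.inl hab_arc)
          · rw [hc.1, hc.2, haM (f a) (f b)]
            exact neg_ne_zero.mpr (h a b (Or.inl hab_arc))
      have hm' : numArcs arc' = m := by
        have e1 : numArcs arc = cnt (fun p : Fin k × Fin k => arc p.1 p.2) :=
          natCard_eq_cnt _
        have e2 : numArcs arc' = cnt (fun p : Fin k × Fin k => arc' p.1 p.2) :=
          natCard_eq_cnt _
        have e3 : cnt (fun p : Fin k × Fin k => arc p.1 p.2)
            = cnt (fun p : Fin k × Fin k => arc' p.1 p.2)
              + cnt (fun p : Fin k × Fin k => p = (a, b)) := by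
          apply cnt_split
          · intro p
            constructor
            · intro h
              by_cases hc : p = (a, b)
              · exact Or.inr hc
              · refine Or.inl ⟨h, ?_⟩
                intro hc'
                exact hc (Prod.ext hc'.1 hc'.2)
            · rintro (h | rfl)
              · exact h.1
              · exact hab_arc
          · rintro p ⟨h1, rfl⟩
            exact h1.2 ⟨rfl, rfl⟩
        have e4 : cnt (fun p : Fin k × Fin k => p = (a, b)) = 1 := by
          classical
          rw [cnt_eq]
          rw [Finset.filter_eq']
          simp
        rw [e1, e3, e4] at hm
        rw [e2]
        exact Nat.add_right_cancel hm
      -- apply IH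
      have hes' : ∀ x y, edge' x y → edge' y x := by
        rintro x y (h | hc | hc)
        · exact Or.inl (hes x y h)
        · exact Or.inr (Or.inr ⟨hc.2, hc.1⟩)
        · exact Or.inr (Or.inl ⟨hc.2, hc.1⟩)
      have hei' : ∀ x, ¬ edge' x x := by
        rintro x (h | hc | hc)
        · exact hei x h
        · exact hab (hc.1.symm.trans hc.2)
        · exact hab (hc.2.symm.trans hc.1)
      have hai' : ∀ x, ¬ arc' x x := fun x h => hai x h.1
      have haa' : ∀ x y, arc' x y → ¬ arc' y x := fun x y h h' => haa x y h.1 h'.1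
      have hd' : ∀ x y, arc' x y → ¬ edge' x y := by
        rintro x y h (h' | hc | hc)
        · exact hd x y h.1 h'
        · exact h.2 hc
        · rw [hc.1, hc.2] at h
          exact haa a b hab_arc h.1
      have hIH := ih arc' edge' hes' hei' hai' haa' hd' hm'
      rw [hZ, hW] at hIH
      -- flip bounds
      have hXY1 : (X : ℝ) - Y ≤ γ * n ^ k :=
        flip_bound hn M γ hγ hP6 arc' edge a b hab hno
      have hXY2 : (Y : ℝ) - X ≤ γ * n ^ k := by
        have hno' : ∀ x y, (x = b ∨ x = a) → (y = b ∨ y = a) → ¬ arc' x y ∧ ¬ edge x y :=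
          fun x y hx hy => hno x y hx.symm hy.symm
        exact flip_bound hn M γ hγ hP6 arc' edge b a hab.symm hno'
      -- final arithmetic
      rw [hX]
      have h2m : (2:ℝ) ^ m ≠ 0 := by positivity
      have hiden : (X:ℝ) - (homUnder M arc edge : ℝ) / 2 ^ (m+1)
          = ((X:ℝ) - Y) / 2 + (((X:ℝ) + Y) - (homUnder M arc edge : ℝ) / 2 ^ m) / 2 := by
        rw [pow_succ]
        field_simp
        ring
      have habs1 : |((X:ℝ) - Y)| ≤ γ * n ^ k := abs_le.mpr ⟨by linarith, hXY1⟩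
      have habs2 : |((X:ℝ) + Y) - (homUnder M arc edge : ℝ) / 2 ^ m|
          ≤ (1 - (1:ℝ)/2^m) * γ * n ^ k := by
        push_cast at hIH
        exact hIH
      have htri : |(X:ℝ) - (homUnder M arc edge : ℝ) / 2 ^ (m+1)|
          ≤ |((X:ℝ) - Y)| / 2 + |((X:ℝ) + Y) - (homUnder M arc edge : ℝ) / 2 ^ m| / 2 := by
        rw [hiden]
        calc |((X:ℝ) - Y) / 2 + (((X:ℝ) + Y) - (homUnder M arc edge : ℝ) / 2 ^ m) / 2|
            ≤ |((X:ℝ) - Y) / 2| + |(((X:ℝ) + Y) - (homUnder M arc edge : ℝ) / 2 ^ m) / 2| :=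
              abs_add_le _ _
          _ = |((X:ℝ) - Y)| / 2 + |((X:ℝ) + Y) - (homUnder M arc edge : ℝ) / 2 ^ m| / 2 := by
              rw [abs_div, abs_div]
              norm_num
      have hfin : (1 - (1:ℝ)/2^(m+1)) * γ * (n:ℝ) ^ k
          = (γ * n ^ k) / 2 + ((1 - (1:ℝ)/2^m) * γ * n ^ k) / 2 := by
        rw [pow_succ]
        field_simp
        ring
      rw [hfin]
      linarith

theorem stmt13 {n k : ℕ} (M : Matrix (Fin n) (Fin n) ℝ)
    (hanti : Mᵀ = -M)
    (hent : ∀ x y, M x y = -1 ∨ M x y = 0 ∨ M x y = 1)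
    (γ : ℝ)
    (hP6 : ∀ A B : Finset (Fin n), (earr M A B : ℝ) - earr M B A ≤ γ * n ^ 2)
    (arc edge : Fin k → Fin k → Prop)
    (hedge_symm : ∀ x y, edge x y → edge y x)
    (hedge_irr : ∀ x, ¬ edge x x)
    (harc_irr : ∀ x, ¬ arc x x)
    (harc_asymm : ∀ x y, arc x y → ¬ arc y x)
    (hdisj : ∀ x y, arc x y → ¬ edge x y) :
    |(homPO M arc edge : ℝ) - (homUnder M arc edge : ℝ) / 2 ^ numArcs arc| ≤
      (1 - (1 : ℝ) / 2 ^ numArcs arc) * γ * n ^ k :=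
  main_aux M hanti hent γ hP6 (numArcs arc) arc edge
    hedge_symm hedge_irr harc_irr harc_asymm hdisj rfl
end

section
/- Let D be an oriented graph on n vertices. If |hom_IV(D) − (1/8)·hom(C₄,D)| ≤ αn⁴, then |hom_II(D) − (1/2)·hom(C₄,D)| ≤ 4αn⁴. (I.e., P1(α) implies P2 with δ = 8α.) -/
open Finset Matrix

/-- hom_I(D) -/
noncomputable def homI {n : ℕ} (M : Matrix (Fin n) (Fin n) ℝ) : ℕ :=
  2 * ∑ x : Fin n, ∑ x' : Fin n, dpm M x x' * dmp M x x'

/-- hom_II(D) -/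
noncomputable def homII {n : ℕ} (M : Matrix (Fin n) (Fin n) ℝ) : ℕ :=
  2 * ∑ x : Fin n, ∑ x' : Fin n,
    (dpp M x x' + dmm M x x') * (dpm M x x' + dmp M x x')

/-- hom_III(D) -/
noncomputable def homIII {n : ℕ} (M : Matrix (Fin n) (Fin n) ℝ) : ℕ :=
  2 * ∑ x : Fin n, ∑ x' : Fin n, (dpm M x x' ^ 2 + dmp M x x' ^ 2)

/-- hom_IV(D) -/
noncomputable def homIV {n : ℕ} (M : Matrix (Fin n) (Fin n) ℝ) : ℕ :=
  ∑ x : Fin n, ∑ x' : Fin n, (dpp M x x' ^ 2 + dmm M x x' ^ 2)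

/-- hom(C₄,D) -/
noncomputable def homC4 {n : ℕ} (M : Matrix (Fin n) (Fin n) ℝ) : ℕ :=
  homI M + homII M + homIII M + homIV M

noncomputable def ip {n : ℕ} (M : Matrix (Fin n) (Fin n) ℝ) (x y : Fin n) : ℕ :=
  if M x y = 1 then 1 else 0
noncomputable def im {n : ℕ} (M : Matrix (Fin n) (Fin n) ℝ) (x y : Fin n) : ℕ :=
  if M x y = -1 then 1 else 0

lemma dpp_eq {n : ℕ} (M : Matrix (Fin n) (Fin n) ℝ) (x x' : Fin n) :
    dpp M x x' = ∑ y, ip M x y * ip M x' y := by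
  rw [dpp, Finset.card_filter]
  exact Finset.sum_congr rfl fun y _ => by
    simp only [ip]; split_ifs <;> simp_all

lemma dmm_eq {n : ℕ} (M : Matrix (Fin n) (Fin n) ℝ) (x x' : Fin n) :
    dmm M x x' = ∑ y, im M x y * im M x' y := by
  rw [dmm, Finset.card_filter]
  exact Finset.sum_congr rfl fun y _ => by
    simp only [im]; split_ifs <;> simp_all

lemma dpm_eq {n : ℕ} (M : Matrix (Fin n) (Fin n) ℝ) (x x' : Fin n) :
    dpm M x x' = ∑ y, ip M x y * im M x' y := by
  rw [dpm, Finset.card_filter]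
  exact Finset.sum_congr rfl fun y _ => by
    simp only [ip, im]; split_ifs <;> simp_all

lemma dmp_eq {n : ℕ} (M : Matrix (Fin n) (Fin n) ℝ) (x x' : Fin n) :
    dmp M x x' = ∑ y, im M x y * ip M x' y := by
  rw [dmp, Finset.card_filter]
  exact Finset.sum_congr rfl fun y _ => by
    simp only [ip, im]; split_ifs <;> simp_all

lemma sum4 {n : ℕ} (F : Fin n → Fin n → Fin n → Fin n → ℕ) :
    ∑ x, ∑ x', ∑ y, ∑ z, F x x' y z = ∑ y, ∑ z, ∑ x, ∑ x', F x x' y z := by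
  calc ∑ x, ∑ x', ∑ y, ∑ z, F x x' y z
      = ∑ x, ∑ y, ∑ x', ∑ z, F x x' y z :=
        Finset.sum_congr rfl fun x _ => Finset.sum_comm
    _ = ∑ y, ∑ x, ∑ x', ∑ z, F x x' y z := Finset.sum_comm
    _ = ∑ y, ∑ x, ∑ z, ∑ x', F x x' y z :=
        Finset.sum_congr rfl fun y _ => Finset.sum_congr rfl fun x _ => Finset.sum_comm
    _ = ∑ y, ∑ z, ∑ x, ∑ x', F x x' y z :=
        Finset.sum_congr rfl fun y _ => Finset.sum_comm

lemma key_s16 {n : ℕ} (M : Matrix (Fin n) (Fin n) ℝ) (hanti : Mᵀ = -M) :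
    ∑ x, ∑ x', dpp M x x' * dmm M x x' = ∑ x, ∑ x', dmp M x x' ^ 2 := by
  have hM : ∀ a b, M a b = -M b a := by
    intro a b
    have := congrFun (congrFun hanti b) a
    simpa using this
  have hdmp : ∀ y z, dmp M y z = ∑ x, ip M x y * im M x z := by
    intro y z
    rw [dmp_eq]
    refine Finset.sum_congr rfl fun x _ => ?_
    have h1 : im M y x = ip M x y := by
      simp only [im, ip]
      have := hM y x
      split_ifs with h h' h' <;> first | rfl | (exfalso; apply h; linarith) | (exfalso; apply h'; linarith)
    have h2 : ip M z x = im M x z := by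
      simp only [im, ip]
      have := hM z x
      split_ifs with h h' h' <;> first | rfl | (exfalso; apply h; linarith) | (exfalso; apply h'; linarith)
    rw [h1, h2]
  calc ∑ x, ∑ x', dpp M x x' * dmm M x x'
      = ∑ x, ∑ x', ∑ y, ∑ z, (ip M x y * im M x z) * (ip M x' y * im M x' z) := by
        refine Finset.sum_congr rfl fun x _ => Finset.sum_congr rfl fun x' _ => ?_
        rw [dpp_eq, dmm_eq, Finset.sum_mul_sum]
        exact Finset.sum_congr rfl fun y _ => Finset.sum_congr rfl fun z _ => by ring
    _ = ∑ y, ∑ z, ∑ x, ∑ x', (ip M x y * im M x z) * (ip M x' y * im M x' z) := sum4 _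
    _ = ∑ y, ∑ z, dmp M y z ^ 2 := by
        refine Finset.sum_congr rfl fun y _ => Finset.sum_congr rfl fun z _ => ?_
        rw [hdmp, sq, Finset.sum_mul_sum]

lemma sym_cd {n : ℕ} (M : Matrix (Fin n) (Fin n) ℝ) :
    ∑ x, ∑ x', dpm M x x' ^ 2 = ∑ x, ∑ x', dmp M x x' ^ 2 := by
  have h : ∀ x x' : Fin n, dpm M x x' = dmp M x' x := by
    intro x x'
    simp only [dpm, dmp]
    congr 1
    ext y
    simp [and_comm]
  calc ∑ x, ∑ x', dpm M x x' ^ 2 = ∑ x, ∑ x', dmp M x' x ^ 2 := by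
        exact Finset.sum_congr rfl fun x _ => Finset.sum_congr rfl fun x' _ => by rw [h]
    _ = ∑ x', ∑ x, dmp M x' x ^ 2 := Finset.sum_comm

lemma main_bounds {n : ℕ} (M : Matrix (Fin n) (Fin n) ℝ) (hanti : Mᵀ = -M) :
    2 * homII M ≤ homC4 M ∧ homC4 M ≤ homII M + 4 * homIV M := by
  set A := ∑ x, ∑ x', dpp M x x' * dmm M x x' with hAdef
  set X := ∑ x, ∑ x', dpm M x x' * dmp M x x' with hXdef
  set C := ∑ x, ∑ x', dpm M x x' ^ 2 with hCdef
  set D := ∑ x, ∑ x', dmp M x x' ^ 2 with hDdef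
  have hA : A = D := key_s16 M hanti
  have hCD : C = D := sym_cd M
  have h2A : 2 * A ≤ homIV M := by
    rw [hAdef, homIV, Finset.mul_sum]
    simp only [Finset.mul_sum]
    refine Finset.sum_le_sum fun x _ => Finset.sum_le_sum fun x' _ => ?_
    zify
    nlinarith [sq_nonneg ((dpp M x x' : ℤ) - dmm M x x')]
  have h2X : 2 * X ≤ C + D := by
    have : C + D = ∑ x, ∑ x', (dpm M x x' ^ 2 + dmp M x x' ^ 2) := by
      rw [hCdef, hDdef]
      simp [Finset.sum_add_distrib]
    rw [this, hXdef, Finset.mul_sum]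
    simp only [Finset.mul_sum]
    refine Finset.sum_le_sum fun x _ => Finset.sum_le_sum fun x' _ => ?_
    zify
    nlinarith [sq_nonneg ((dpm M x x' : ℤ) - dmp M x x')]
  have hI : homI M = 2 * X := rfl
  have hIII : homIII M = 2 * (C + D) := by
    rw [homIII, hCdef, hDdef]
    simp [Finset.sum_add_distrib]
  have hII : homII M ≤ homIV M + 2 * A + (C + D) + 2 * X := by
    have hrhs : homIV M + 2 * A + (C + D) + 2 * X =
        ∑ x, ∑ x', ((dpp M x x' ^ 2 + dmm M x x' ^ 2) + 2 * (dpp M x x' * dmm M x x')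
          + (dpm M x x' ^ 2 + dmp M x x' ^ 2) + 2 * (dpm M x x' * dmp M x x')) := by
      rw [homIV, hAdef, hCdef, hDdef, hXdef]
      simp only [Finset.mul_sum, Finset.sum_add_distrib]
    rw [hrhs, homII, Finset.mul_sum]
    simp only [Finset.mul_sum]
    refine Finset.sum_le_sum fun x _ => Finset.sum_le_sum fun x' _ => ?_
    zify
    nlinarith [sq_nonneg ((dpp M x x' : ℤ) + dmm M x x' - dpm M x x' - dmp M x x')]
  constructor
  · -- 2 homII ≤ homC4
    have : homII M ≤ homI M + homIII M + homIV M := by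
      rw [hI, hIII]
      omega
    rw [homC4]
    omega
  · rw [homC4, hI, hIII]
    omega

theorem stmt16 {n : ℕ} (M : Matrix (Fin n) (Fin n) ℝ)
    (hanti : Mᵀ = -M)
    (hent : ∀ x y, M x y = -1 ∨ M x y = 0 ∨ M x y = 1)
    (α : ℝ)
    (h1 : |(homIV M : ℝ) - (1 / 8) * homC4 M| ≤ α * n ^ 4) :
    |(homII M : ℝ) - (1 / 2) * homC4 M| ≤ 4 * α * n ^ 4 := by
  obtain ⟨hL1, hL3⟩ := main_bounds M hanti
  have hL2 : homC4 M ≤ 8 * homIV M := by omega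
  have hL1' : 2 * (homII M : ℝ) ≤ homC4 M := by exact_mod_cast hL1
  have hL3' : (homC4 M : ℝ) ≤ homII M + 4 * homIV M := by exact_mod_cast hL3
  have hL2' : (homC4 M : ℝ) ≤ 8 * homIV M := by exact_mod_cast hL2
  have hnn : (0:ℝ) ≤ α * n ^ 4 := le_trans (abs_nonneg _) h1
  rw [abs_le] at h1 ⊢
  constructor <;> linarith [h1.1, h1.2]
end
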